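/- For n×n diagonalizable-over-ℝ arguments, the matrix B_{n,1} (the generalized companion matrix of P_n with c_i = n/(n-i+1)) has eigenvalue λ_j with eigenvector v_j = (1, 2λ_j, 3λ_j^2, ..., n λ_j^{n-1}) for each root λ_j of P_n. -/

import Mathlib

open Finset

/-- The `k`-th elementary symmetric function of `l 1, …, l n`. -/
def esymm (n : ℕ) (l : Fin n → ℝ) (k : ℕ) : ℝ :=
  ∑ s ∈ Finset.univ.powersetCard k, ∏ i ∈ s, l i

/-- The matrix `B_{n,1}`: the generalized companion matrix of `P_n` with
`c_i = n/(n-i+1)`, i.e. superdiagonal entries `i/(i+1)` (1-based) and last row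
entries `(-1)^{n-j} (n/j) σ_{n-j+1}`. -/
noncomputable def Bn1 (n : ℕ) (l : Fin n → ℝ) : Matrix (Fin n) (Fin n) ℝ :=
  Matrix.of fun i j =>
    if i.val = n - 1 then
      (-1 : ℝ) ^ (n - 1 - j.val) * ((n : ℝ) / ((j.val : ℝ) + 1)) * esymm n l (n - j.val)
    else if j.val = i.val + 1 then ((i.val : ℝ) + 1) / ((i.val : ℝ) + 2)
    else 0

open Polynomial in
lemma coeff_prod_X_sub_C (n : ℕ) (l : Fin n → ℝ) (k : ℕ) (h : k ≤ n) :
    (∏ i : Fin n, (X - C (l i))).coeff k = (-1) ^ (n - k) * esymm n l (n - k) := by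
  have hcard : Multiset.card ((Finset.univ.val : Multiset (Fin n)).map l) = n := by simp
  have h1 : (∏ i : Fin n, (X - C (l i))) =
      (((Finset.univ.val : Multiset (Fin n)).map l).map fun t => X - C t).prod := by
    rw [Multiset.map_map]
    rfl
  rw [h1, Multiset.prod_X_sub_C_coeff _ (by rw [hcard]; exact h), hcard,
    Finset.esymm_map_val]
  rfl

open Polynomial in
lemma root_sum (n : ℕ) (hn : 1 < n) (l : Fin n → ℝ) (j : Fin n) :
    ∑ k ∈ Finset.range n, (-1 : ℝ) ^ (n - 1 - k) * esymm n l (n - k) * l j ^ k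
      = l j ^ n := by
  set p : ℝ[X] := ∏ i : Fin n, (X - C (l i)) with hp
  have hmonic : p.Monic := monic_prod_of_monic _ _ fun i _ => monic_X_sub_C _
  have hdeg : p.natDegree = n := by
    rw [hp, natDegree_prod _ _ fun i _ => X_sub_C_ne_zero _]
    simp
  have heval : p.eval (l j) = 0 := by
    rw [hp, eval_prod]
    exact Finset.prod_eq_zero (Finset.mem_univ j) (by simp)
  rw [eval_eq_sum_range' (by rw [hdeg]; exact Nat.lt_succ_self n),
    Finset.sum_range_succ] at heval
  have hlead : p.coeff n = 1 := by
    have := hmonic.leadingCoeff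
    rwa [leadingCoeff, hdeg] at this
  have hsum : ∑ k ∈ Finset.range n, p.coeff k * l j ^ k = -(l j ^ n) := by
    rw [hlead, one_mul] at heval
    linarith
  have hrw : ∀ k ∈ Finset.range n,
      (-1 : ℝ) ^ (n - 1 - k) * esymm n l (n - k) * l j ^ k
        = -(p.coeff k * l j ^ k) := by
    intro k hk
    rw [Finset.mem_range] at hk
    rw [coeff_prod_X_sub_C n l k hk.le]
    have h2 : n - k = (n - 1 - k) + 1 := by omega
    rw [h2, pow_succ]
    ring
  rw [Finset.sum_congr rfl hrw, Finset.sum_neg_distrib, hsum, neg_neg]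

/-- For each root `λ_j` of `P_n`, the matrix `B_{n,1}` has eigenvalue `λ_j` with
eigenvector `v_j = (1, 2λ_j, 3λ_j², …, n λ_j^{n-1})`. -/
theorem Bn1_eigenvector (n : ℕ) (hn : 1 < n) (l : Fin n → ℝ) (j : Fin n)
    (v : Fin n → ℝ) (hv : ∀ i : Fin n, v i = ((i.val : ℝ) + 1) * l j ^ i.val) :
    (Bn1 n l).mulVec v = l j • v := by
  funext i
  rw [Matrix.mulVec, dotProduct]
  simp only [Pi.smul_apply, smul_eq_mul]
  by_cases hi : i.val = n - 1
  · -- last row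
    have key := root_sum n hn l j
    calc ∑ k : Fin n, Bn1 n l i k * v k
        = ∑ k : Fin n, (n : ℝ) *
            ((-1 : ℝ) ^ (n - 1 - k.val) * esymm n l (n - k.val) * l j ^ k.val) := by
          refine Finset.sum_congr rfl fun k _ => ?_
          rw [Bn1, Matrix.of_apply, if_pos hi, hv k]
          have hk0 : ((k.val : ℝ) + 1) ≠ 0 := by positivity
          field_simp
      _ = (n : ℝ) * l j ^ n := by
          rw [← Finset.mul_sum]
          congr 1
          rw [← key, ← Fin.sum_univ_eq_sum_range
            (fun k => (-1 : ℝ) ^ (n - 1 - k) * esymm n l (n - k) * l j ^ k)]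
      _ = l j * v i := by
          rw [hv i, hi]
          have hc : ((n - 1 : ℕ) : ℝ) + 1 = n := by
            push_cast [Nat.cast_sub hn.le]; ring
          have hpw : l j ^ n = l j ^ (n - 1) * l j := by
            rw [← pow_succ]; congr 1; omega
          rw [hpw, hc]; ring
  · -- row i < n - 1
    have hi' : i.val + 1 < n := by omega
    have := Finset.sum_eq_single (s := Finset.univ) (M := ℝ) (f := fun k : Fin n => Bn1 n l i k * v k)
      ⟨i.val + 1, hi'⟩ ?_ ?_
    · rw [this]
      rw [Bn1, Matrix.of_apply, if_neg hi, if_pos rfl, hv, hv]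
      simp only
      have h2 : ((i.val : ℝ) + 2) ≠ 0 := by positivity
      field_simp
      push_cast
      ring
    · intro k _ hk
      simp only [Bn1, Matrix.of_apply]
      rw [if_neg hi, if_neg, zero_mul]
      intro hkv
      exact hk (Fin.ext hkv)
    · intro h
      exact absurd (Finset.mem_univ _) h
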